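/- Every automorphism φ of an n-dimensional nilpotent evolution algebra E with maximal nilindex is upper triangular with diagonal entries φ_{ii} = α^{2^{i−1}} (where α = φ_{11} ≠ 0), and its only possible off-diagonal nonzero entries lie in the last column: φ(e_i) ∈ span{e_i, e_n} for all i. -/

import Mathlib

set_option linter.unusedSectionVars false

open Finset

section Aux

variable {K E : Type*} [Field K] [NonUnitalNonAssocRing E]
    [Module K E] [SMulCommClass K E E] [IsScalarTower K E E]
    {n : ℕ} (a : Fin n → Fin n → K) (e : Module.Basis (Fin n) K E)

/-- structure coefficient with indicator -/
def Ac (a : Fin n → Fin n → K) (i m : Fin n) : K := if i < m then a i m else 0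

lemma repr_sq (hsq : ∀ i : Fin n, e i * e i = ∑ j ∈ Finset.univ.filter (fun j => i < j), a i j • e j)
    (i m : Fin n) : e.repr (e i * e i) m = Ac a i m := by
  rw [hsq]
  simp only [map_sum, map_smul, Module.Basis.repr_self, Finsupp.coe_finset_sum, Finset.sum_apply,
    Finsupp.coe_smul, Pi.smul_apply, Finsupp.single_apply, smul_eq_mul, mul_ite, mul_one, mul_zero]
  rw [Finset.sum_ite_eq' ]
  simp [Ac]

lemma mul_diag (hzero : ∀ i j : Fin n, i ≠ j → e i * e j = 0) (x y : E) :
    x * y = ∑ i : Fin n, (e.repr x i * e.repr y i) • (e i * e i) := by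
  conv_lhs => rw [← e.sum_repr x, ← e.sum_repr y]
  rw [Finset.sum_mul_sum]
  rw [Finset.sum_congr rfl (fun i _ => Finset.sum_eq_single i
    (fun j _ hj => by rw [smul_mul_smul_comm, hzero i j (Ne.symm hj), smul_zero]) (by simp))]
  exact Finset.sum_congr rfl (fun i _ => by rw [smul_mul_smul_comm])

lemma repr_mul (hzero : ∀ i j : Fin n, i ≠ j → e i * e j = 0)
    (hsq : ∀ i : Fin n, e i * e i = ∑ j ∈ Finset.univ.filter (fun j => i < j), a i j • e j)
    (x y : E) (m : Fin n) :
    e.repr (x * y) m = ∑ i : Fin n, e.repr x i * e.repr y i * Ac a i m := by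
  rw [mul_diag e hzero x y]
  simp [repr_sq a e hsq]

end Aux

section Aux2

variable {K E : Type*} [Field K] [NonUnitalNonAssocRing E]
    [Module K E] [SMulCommClass K E E] [IsScalarTower K E E]
    {n : ℕ} (a : Fin n → Fin n → K) (e : Module.Basis (Fin n) K E)

def Uu (e : Module.Basis (Fin n) K E) (k : ℕ) : Submodule K E :=
  Submodule.span K (e '' {j | k ≤ (j : ℕ)})

lemma mem_Uu {x : E} {k : ℕ} :
    x ∈ Uu e k ↔ ∀ j : Fin n, (j : ℕ) < k → e.repr x j = 0 := by
  rw [Uu, Module.Basis.mem_span_image]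
  constructor
  · intro h j hj
    by_contra hne
    have := h (Finsupp.mem_support_iff.2 hne)
    simp only [Set.mem_setOf_eq] at this
    omega
  · intro h j hj
    simp only [Finset.mem_coe, Finsupp.mem_support_iff] at hj
    simp only [Set.mem_setOf_eq]
    by_contra hc
    exact hj (h j (by omega))

def Pp (e : Module.Basis (Fin n) K E) (k : ℕ) : Submodule K E :=
  Submodule.span K {z | ∃ x ∈ Uu e k, ∃ y ∈ Uu e k, z = x * y}

lemma Pp_eq_Uu (hzero : ∀ i j : Fin n, i ≠ j → e i * e j = 0)
    (hsq : ∀ i : Fin n, e i * e i = ∑ j ∈ Finset.univ.filter (fun j => i < j), a i j • e j)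
    (hne : ∀ i : Fin n, ∀ hi : (i : ℕ) + 1 < n, a i ⟨(i : ℕ) + 1, hi⟩ ≠ 0)
    (k : ℕ) : Pp e k = Uu e (k + 1) := by
  apply le_antisymm
  · rw [Pp, Submodule.span_le]
    rintro z ⟨x, hx, y, hy, rfl⟩
    rw [SetLike.mem_coe, mem_Uu]
    intro j hj
    rw [repr_mul a e hzero hsq]
    apply Finset.sum_eq_zero
    intro i _
    rcases lt_or_ge (i : ℕ) k with h | h
    · rw [mem_Uu] at hx
      rw [hx i h, zero_mul, zero_mul]
    · have : ¬ i < j := by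
        rw [Fin.lt_def]; omega
      simp [Ac, this]
  · rw [Uu, Submodule.span_le]
    rintro z ⟨j, hj, rfl⟩
    simp only [Set.mem_setOf_eq] at hj
    -- descending induction on n - j
    suffices H : ∀ d : ℕ, ∀ j : Fin n, n - (j : ℕ) = d → k + 1 ≤ (j : ℕ) → e j ∈ Pp e k by
      exact H (n - j) j rfl hj
    intro d
    induction d using Nat.strong_induction_on with
    | _ d IH =>
      intro j hd hj
      have hjn : (j : ℕ) < n := j.2
      -- j - 1
      set i : Fin n := ⟨(j : ℕ) - 1, by omega⟩ with hi
      have hii : (i : ℕ) + 1 = (j : ℕ) := by simp [hi]; omega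
      have hiU : e i ∈ Uu e k := by
        apply Submodule.subset_span
        exact ⟨i, by simp [hi]; omega, rfl⟩
      have hsqP : e i * e i ∈ Pp e k :=
        Submodule.subset_span ⟨e i, hiU, e i, hiU, rfl⟩
      rw [hsq i] at hsqP
      -- split off the j term
      have hmem : j ∈ Finset.univ.filter (fun l => i < l) := by
        simp only [Finset.mem_filter, Finset.mem_univ, true_and, Fin.lt_def]; omega
      rw [← Finset.add_sum_erase _ _ hmem] at hsqP
      have hrest : ∑ l ∈ (Finset.univ.filter (fun l => i < l)).erase j, a i l • e l ∈ Pp e k := by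
        apply Submodule.sum_mem
        intro l hl
        simp only [Finset.mem_erase, Finset.mem_filter, Fin.lt_def] at hl
        apply Submodule.smul_mem
        have hlj : (j : ℕ) < (l : ℕ) := by
          rcases lt_or_ge (j:ℕ) (l:ℕ) with h | h
          · exact h
          · exact absurd (Fin.ext (by omega : (l:ℕ) = (j:ℕ))) hl.1
        exact IH (n - l) (by omega) l rfl (by omega)
      have : a i j • e j ∈ Pp e k := by
        have := Submodule.sub_mem _ hsqP hrest
        simpa using this
      have hane : a i j ≠ 0 := by
        have := hne i (by omega)
        convert this using 2
        exact Fin.ext (by simp [hi]; omega)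
      have := Submodule.smul_mem _ (a i j)⁻¹ this
      rwa [smul_smul, inv_mul_cancel₀ hane, one_smul] at this

end Aux2

section Aux3

variable {K E : Type*} [Field K] [NonUnitalNonAssocRing E]
    [Module K E] [SMulCommClass K E E] [IsScalarTower K E E]
    {n : ℕ} (a : Fin n → Fin n → K) (e : Module.Basis (Fin n) K E)

lemma map_Uu (hzero : ∀ i j : Fin n, i ≠ j → e i * e j = 0)
    (hsq : ∀ i : Fin n, e i * e i = ∑ j ∈ Finset.univ.filter (fun j => i < j), a i j • e j)
    (hne : ∀ i : Fin n, ∀ hi : (i : ℕ) + 1 < n, a i ⟨(i : ℕ) + 1, hi⟩ ≠ 0)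
    (φ : E →ₗ[K] E) (hbij : Function.Bijective φ)
    (hmul : ∀ x y : E, φ (x * y) = φ x * φ y) :
    ∀ k : ℕ, Submodule.map φ (Uu e k) = Uu e k := by
  intro k
  induction k with
  | zero =>
    have htop : Uu e 0 = ⊤ := by
      rw [eq_top_iff, ← e.span_eq, Submodule.span_le, Uu]
      rintro x ⟨i, rfl⟩
      exact Submodule.subset_span ⟨i, by simp, rfl⟩
    rw [htop, Submodule.map_top, LinearMap.range_eq_top.2 hbij.2]
  | succ k IHk =>
    rw [← Pp_eq_Uu a e hzero hsq hne k, Pp, Submodule.map_span]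
    congr 1
    ext z
    simp only [Set.mem_image, Set.mem_setOf_eq]
    constructor
    · rintro ⟨w, ⟨x, hx, y, hy, rfl⟩, rfl⟩
      exact ⟨φ x, IHk ▸ Submodule.mem_map_of_mem hx,
             φ y, IHk ▸ Submodule.mem_map_of_mem hy, hmul x y⟩
    · rintro ⟨x', hx', y', hy', rfl⟩
      rw [← IHk] at hx' hy'
      obtain ⟨x, hx, rfl⟩ := hx'
      obtain ⟨y, hy, rfl⟩ := hy'
      exact ⟨x * y, ⟨x, hx, y, hy, rfl⟩, hmul x y⟩

end Aux3

/-- every automorphism `φ` of an `n`-dimensional nilpotent evolution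
algebra of maximal nilindex is upper triangular with diagonal entries
`φ_{ii} = α^{2^{i−1}}` (`α = φ_{11} ≠ 0`), and its only possible off-diagonal nonzero
entries lie in the last column: `φ(e_i) ∈ span{e_i, e_n}` for all `i`. -/
theorem stmt17 {K E : Type*} [Field K] [CharZero K] [NonUnitalNonAssocRing E]
    [Module K E] [SMulCommClass K E E] [IsScalarTower K E E]
    (n : ℕ) (hn : 2 ≤ n) (a : Fin n → Fin n → K) (e : Module.Basis (Fin n) K E)
    (hzero : ∀ i j : Fin n, i ≠ j → e i * e j = 0)
    (hsq : ∀ i : Fin n, e i * e i = ∑ j ∈ Finset.univ.filter (fun j => i < j), a i j • e j)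
    (hne : ∀ i : Fin n, ∀ hi : (i : ℕ) + 1 < n, a i ⟨(i : ℕ) + 1, hi⟩ ≠ 0)
    (φ : E →ₗ[K] E) (hbij : Function.Bijective φ)
    (hmul : ∀ x y : E, φ (x * y) = φ x * φ y) :
    ∃ α : K, α ≠ 0 ∧ α = e.repr (φ (e ⟨0, by omega⟩)) ⟨0, by omega⟩ ∧
      ∀ i : Fin n, ∃ c : K,
        φ (e i) = (α ^ 2 ^ (i : ℕ)) • e i + c • e ⟨n - 1, by omega⟩ := by
  set f : Fin n → Fin n → K := fun i j => e.repr (φ (e i)) j with hf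
  have hUinv := map_Uu a e hzero hsq hne φ hbij hmul
  -- triangularity
  have htri : ∀ i j : Fin n, (j : ℕ) < (i : ℕ) → f i j = 0 := by
    intro i j hj
    have h1 : φ (e i) ∈ Uu e i := by
      rw [← hUinv (i : ℕ)]
      exact Submodule.mem_map_of_mem (Submodule.subset_span ⟨i, by simp, rfl⟩)
    exact (mem_Uu e).1 h1 j hj
  -- the square relation
  have hR2 : ∀ i m : Fin n,
      (∑ k : Fin n, f i k * f i k * Ac a k m) = ∑ j : Fin n, Ac a i j * f j m := by
    intro i m
    have h1 : e.repr (φ (e i * e i)) m = ∑ k : Fin n, f i k * f i k * Ac a k m := by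
      rw [hmul]; exact repr_mul a e hzero hsq _ _ m
    have h2 : e.repr (φ (e i * e i)) m = ∑ j : Fin n, Ac a i j * f j m := by
      rw [hsq i, map_sum, map_sum]
      simp only [map_smul, Finsupp.coe_finset_sum, Finset.sum_apply, Finsupp.coe_smul,
        Pi.smul_apply, smul_eq_mul]
      rw [Finset.sum_filter]
      apply Finset.sum_congr rfl
      intro j _
      simp [Ac, ite_mul, hf]
    rw [← h1, h2]
  -- diagonal recursion
  have hdiag : ∀ i : Fin n, ∀ h1 : (i : ℕ) + 1 < n,
      f ⟨(i : ℕ) + 1, h1⟩ ⟨(i : ℕ) + 1, h1⟩ = f i i * f i i := by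
    intro i h1
    set j : Fin n := ⟨(i : ℕ) + 1, h1⟩ with hj
    have hR := hR2 i j
    have hL : (∑ k : Fin n, f i k * f i k * Ac a k j) = f i i * f i i * a i j := by
      rw [Finset.sum_eq_single i]
      · have : i < j := by rw [Fin.lt_def]; simp [hj]
        simp [Ac, this]
      · intro k _ hk
        rcases lt_or_ge (k : ℕ) (i : ℕ) with h | h
        · rw [htri i k h]; ring
        · have : ¬ k < j := by rw [Fin.lt_def]; simp [hj]; omega
          simp [Ac, this]
      · simp
    have hRr : (∑ l : Fin n, Ac a i l * f l j) = a i j * f j j := by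
      rw [Finset.sum_eq_single j]
      · have : i < j := by rw [Fin.lt_def]; simp [hj]
        simp [Ac, this]
      · intro l _ hl
        rcases lt_or_ge (i : ℕ) (l : ℕ) with h | h
        · have hlj : (j : ℕ) < (l : ℕ) := by
            simp only [hj] at hl ⊢
            rcases lt_or_ge ((i:ℕ)+1) (l:ℕ) with h' | h'
            · exact h'
            · exact absurd (Fin.ext (by omega : (l : ℕ) = (i:ℕ)+1)) hl
          rw [htri l j hlj]; ring
        · have : ¬ i < l := by rw [Fin.lt_def]; omega
          simp [Ac, this]
      · simp
    rw [hL, hRr] at hR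
    have ha : a i j ≠ 0 := hne i h1
    have h2 : a i j * (f i i * f i i) = a i j * f j j := by linear_combination hR
    exact (mul_left_cancel₀ ha h2).symm
  -- the diagonal powers
  set α : K := f ⟨0, by omega⟩ ⟨0, by omega⟩ with hα
  have hpow : ∀ m : ℕ, ∀ hm : m < n, f ⟨m, hm⟩ ⟨m, hm⟩ = α ^ 2 ^ m := by
    intro m
    induction m with
    | zero => intro hm; rw [pow_zero, pow_one]
    | succ m IH =>
      intro hm
      have hmn : m < n := by omega
      have := hdiag ⟨m, hmn⟩ hm
      simp only [Fin.val_mk] at this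
      rw [this, IH hmn, ← pow_add]
      congr 1
      ring
  have hdiagpow : ∀ i : Fin n, f i i = α ^ 2 ^ (i : ℕ) := fun i => by
    have := hpow (i : ℕ) i.2
    simpa using this
  -- α ≠ 0
  have hαne : α ≠ 0 := by
    intro h0
    have hmem : φ (e ⟨0, by omega⟩) ∈ Uu e 1 := by
      rw [mem_Uu]
      intro j hj
      have hj0 : (j : ℕ) = 0 := by omega
      have : j = ⟨0, by omega⟩ := Fin.ext (by simp [hj0])
      rw [this]
      exact h0
    rw [← hUinv 1] at hmem
    obtain ⟨x, hx, hxe⟩ := hmem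
    have := hbij.1 hxe
    rw [this] at hx
    have := (mem_Uu e).1 hx ⟨0, by omega⟩ (by simp)
    simp at this
  -- last column
  have hlast : ∀ i k : Fin n, (i : ℕ) < (k : ℕ) → ∀ hk : (k : ℕ) + 1 < n, f i k = 0 := by
    intro i k hik hk
    set m : Fin n := ⟨(k : ℕ) + 1, hk⟩ with hm
    have hz : φ (e i) * φ (e k) = 0 := by
      rw [← hmul, hzero i k (by intro h; rw [h] at hik; omega), map_zero]
    have hrep : (∑ l : Fin n, f i l * f k l * Ac a l m) = 0 := by
      rw [← repr_mul a e hzero hsq, hz, map_zero]; rfl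
    rw [Finset.sum_eq_single k] at hrep
    · have hkm : k < m := by rw [Fin.lt_def]; simp [hm]
      simp only [Ac, hkm, if_pos] at hrep
      have hfkk : f k k ≠ 0 := by rw [hdiagpow k]; exact pow_ne_zero _ hαne
      have ham : a k m ≠ 0 := hne k hk
      rcases mul_eq_zero.1 hrep with h | h
      · rcases mul_eq_zero.1 h with h' | h'
        · exact h'
        · exact absurd h' hfkk
      · exact absurd h ham
    · intro l _ hl
      rcases lt_or_ge (l : ℕ) (k : ℕ) with h | h
      · rw [htri k l h]; ring
      · have : ¬ l < m := by
          rw [Fin.lt_def]; simp only [hm]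
          have : (k : ℕ) < (l : ℕ) := by
            rcases lt_or_ge (k:ℕ) (l:ℕ) with h' | h'
            · exact h'
            · exact absurd (Fin.ext (by omega : (l:ℕ) = (k:ℕ))) hl
          omega
        simp [Ac, this]
    · simp
  -- assemble
  refine ⟨α, hαne, rfl, ?_⟩
  intro i
  set w : Fin n := ⟨n - 1, by omega⟩ with hw
  rcases eq_or_ne i w with hiw | hiw
  · refine ⟨0, ?_⟩
    rw [zero_smul, add_zero]
    have hvan : ∀ j ∈ Finset.univ, j ∉ ({i} : Finset (Fin n)) → f i j • e j = 0 := by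
      intro j _ hj
      simp only [Finset.mem_singleton] at hj
      rcases lt_or_ge (j : ℕ) (i : ℕ) with h | h
      · rw [htri i j h, zero_smul]
      · have : (j : ℕ) = (i : ℕ) := by
          have := j.2
          simp only [hiw, hw] at h ⊢
          omega
        exact absurd (Fin.ext this) hj
    have hsub := (Finset.sum_subset (Finset.subset_univ {i}) hvan).symm
    have hre : φ (e i) = ∑ j : Fin n, f i j • e j := (e.sum_repr (φ (e i))).symm
    rw [hre, hsub, Finset.sum_singleton, hdiagpow i]
  · have hiwlt : (i : ℕ) < n - 1 := by
      have := i.2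
      have : (i : ℕ) ≠ n - 1 := fun h => hiw (Fin.ext (by simp [hw, h]))
      omega
    refine ⟨f i w, ?_⟩
    have hvan : ∀ j ∈ Finset.univ, j ∉ ({i, w} : Finset (Fin n)) → f i j • e j = 0 := by
      intro j _ hj
      simp only [Finset.mem_insert, Finset.mem_singleton, not_or] at hj
      rcases lt_trichotomy (j : ℕ) (i : ℕ) with h | h | h
      · rw [htri i j h, zero_smul]
      · exact absurd (Fin.ext h) hj.1
      · have hjn : (j : ℕ) + 1 < n := by
          have := j.2
          have : (j : ℕ) ≠ n - 1 := fun hc => hj.2 (Fin.ext (by simp [hw, hc]))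
          omega
        rw [hlast i j h hjn, zero_smul]
    have hsub := (Finset.sum_subset (Finset.subset_univ {i, w}) hvan).symm
    have hre : φ (e i) = ∑ j : Fin n, f i j • e j := (e.sum_repr (φ (e i))).symm
    rw [hre, hsub, Finset.sum_pair hiw, hdiagpow i]
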